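/- Let c > 0 and let R¹,...,Rᴺ ∈ ℝ with at least one Rⁱ > 0 and (1/N)∑ᵢ φ(Rⁱ,c) = e where φ(x,c) = exp(x²/(2c)) for x > 0, else 1. Let V¹,...,Vᴺ ≥ 0 with Vⁱ ≤ V for all i. Then (∑_{i: Rⁱ>0} Vⁱ·(1/c + (Rⁱ)²/c²)·exp((Rⁱ)²/(2c))) / (2·∑_{i: Rⁱ>0} ((Rⁱ)²/c²)·exp((Rⁱ)²/(2c))) ≤ 3V. -/

import Mathlib

noncomputable def phi (x c : ℝ) : ℝ := if 0 < x then Real.exp (x ^ 2 / (2 * c)) else 1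

theorem dc_dt_bound (N : ℕ) (hN : 1 ≤ N) (c : ℝ) (hc : 0 < c)
    (R : Fin N → ℝ) (hpos : ∃ i, 0 < R i)
    (hpot : (1 / (N : ℝ)) * ∑ i, phi (R i) c = Real.exp 1)
    (Vi : Fin N → ℝ) (V : ℝ) (hVi0 : ∀ i, 0 ≤ Vi i) (hViV : ∀ i, Vi i ≤ V) :
    (∑ i ∈ Finset.univ.filter fun i => 0 < R i,
        Vi i * (1 / c + R i ^ 2 / c ^ 2) * Real.exp (R i ^ 2 / (2 * c))) /
      (2 * ∑ i ∈ Finset.univ.filter fun i => 0 < R i,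
        R i ^ 2 / c ^ 2 * Real.exp (R i ^ 2 / (2 * c))) ≤ 3 * V := by
  classical
  set S := Finset.univ.filter fun i => 0 < R i with hSdef
  obtain ⟨j, hj⟩ := hpos
  have hjS : j ∈ S := by simp [hSdef, hj]
  have hV0 : 0 ≤ V := le_trans (hVi0 j) (hViV j)
  set D := ∑ i ∈ S, R i ^ 2 / c ^ 2 * Real.exp (R i ^ 2 / (2 * c)) with hDdef
  have hDterm : ∀ i ∈ S, 0 ≤ R i ^ 2 / c ^ 2 * Real.exp (R i ^ 2 / (2 * c)) := by
    intro i _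
    positivity
  have hD0 : 0 < D := by
    refine Finset.sum_pos' hDterm ⟨j, hjS, ?_⟩
    have hj2 : 0 < R j ^ 2 := by positivity
    positivity
  set A := ∑ i ∈ S, Real.exp (R i ^ 2 / (2 * c)) with hAdef
  have hNpos : (0:ℝ) < N := by exact_mod_cast hN
  -- total sum from potential
  have hsum : ∑ i, phi (R i) c = N * Real.exp 1 := by
    have := hpot
    field_simp at this
    linarith [this]
  -- split sum
  have hsplit : ∑ i, phi (R i) c = A + ((N : ℝ) - S.card) := by
    rw [← Finset.sum_filter_add_sum_filter_not Finset.univ (fun i => 0 < R i) (fun i => phi (R i) c)]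
    congr 1
    · rw [hAdef]
      apply Finset.sum_congr rfl
      intro i hi
      rw [Finset.mem_filter] at hi
      simp [phi, hi.2]
    · have h1 : ∑ i ∈ Finset.univ.filter (fun i => ¬ 0 < R i), phi (R i) c
          = (Finset.univ.filter (fun i => ¬ 0 < R i)).card := by
        rw [Finset.card_eq_sum_ones]
        push_cast
        apply Finset.sum_congr rfl
        intro i hi
        rw [Finset.mem_filter] at hi
        simp [phi, hi.2]
      rw [h1]
      have h2 : (Finset.univ.filter (fun i => ¬ 0 < R i)).card = N - S.card := by
        rw [Finset.filter_not, Finset.card_sdiff_of_subset (Finset.subset_univ _), Finset.card_univ,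
          Fintype.card_fin]
      rw [h2]
      have hle : S.card ≤ N := by
        have := Finset.card_le_card (Finset.filter_subset (fun i => 0 < R i) Finset.univ)
        simpa using this
      push_cast [Nat.cast_sub hle]
      ring
  have hcard_le : (S.card : ℝ) ≤ N := by
    have : S.card ≤ N := by
      have := Finset.card_le_card (Finset.filter_subset (fun i => 0 < R i) Finset.univ)
      simpa using this
    exact_mod_cast this
  have hA : A + ((N:ℝ) - S.card) = N * Real.exp 1 := by rw [← hsplit]; exact hsum
  -- pointwise exp x ≤ 1 + x exp x
  have hpt : ∀ i ∈ S, Real.exp (R i ^ 2 / (2 * c)) ≤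
      1 + (c / 2) * (R i ^ 2 / c ^ 2 * Real.exp (R i ^ 2 / (2 * c))) := by
    intro i _
    set x := R i ^ 2 / (2 * c) with hx
    have hx0 : 0 ≤ x := by positivity
    have h1 : 1 - x ≤ Real.exp (-x) := by linarith [Real.add_one_le_exp (-x)]
    have h2 : (1 - x) * Real.exp x ≤ 1 := by
      have := mul_le_mul_of_nonneg_right h1 (Real.exp_pos x).le
      rwa [← Real.exp_add, neg_add_cancel, Real.exp_zero] at this
    have h3 : (c / 2) * (R i ^ 2 / c ^ 2) = x := by
      rw [hx]; field_simp
    calc Real.exp x ≤ 1 + x * Real.exp x := by nlinarith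
      _ = 1 + (c / 2) * (R i ^ 2 / c ^ 2 * Real.exp x) := by rw [← h3]; ring
  have hAB : A ≤ (S.card : ℝ) + (c / 2) * D := by
    calc A ≤ ∑ i ∈ S, (1 + (c / 2) * (R i ^ 2 / c ^ 2 * Real.exp (R i ^ 2 / (2 * c)))) :=
        Finset.sum_le_sum hpt
      _ = (S.card : ℝ) + (c / 2) * D := by
        rw [Finset.sum_add_distrib, ← Finset.mul_sum]
        simp [hDdef]
  have he2 : (2:ℝ) ≤ Real.exp 1 := by linarith [Real.add_one_le_exp 1]
  -- N(e-1) ≤ (c/2) D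
  have hB : (N:ℝ) * (Real.exp 1 - 1) ≤ (c / 2) * D := by nlinarith
  have hAN : A ≤ (N:ℝ) * Real.exp 1 := by nlinarith
  have hAcD : A ≤ c * D := by nlinarith
  -- numerator bound
  have hnum : (∑ i ∈ S, Vi i * (1 / c + R i ^ 2 / c ^ 2) * Real.exp (R i ^ 2 / (2 * c)))
      ≤ V * ((1 / c) * A + D) := by
    have : ∀ i ∈ S, Vi i * (1 / c + R i ^ 2 / c ^ 2) * Real.exp (R i ^ 2 / (2 * c))
        ≤ V * ((1 / c) * Real.exp (R i ^ 2 / (2 * c)) + R i ^ 2 / c ^ 2 * Real.exp (R i ^ 2 / (2 * c))) := by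
      intro i _
      have hfac : 0 ≤ (1 / c + R i ^ 2 / c ^ 2) * Real.exp (R i ^ 2 / (2 * c)) := by positivity
      have := mul_le_mul_of_nonneg_right (hViV i) hfac
      calc Vi i * (1 / c + R i ^ 2 / c ^ 2) * Real.exp (R i ^ 2 / (2 * c))
          = Vi i * ((1 / c + R i ^ 2 / c ^ 2) * Real.exp (R i ^ 2 / (2 * c))) := by ring
        _ ≤ V * ((1 / c + R i ^ 2 / c ^ 2) * Real.exp (R i ^ 2 / (2 * c))) := this
        _ = V * ((1 / c) * Real.exp (R i ^ 2 / (2 * c)) + R i ^ 2 / c ^ 2 * Real.exp (R i ^ 2 / (2 * c))) := by ring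
    calc (∑ i ∈ S, Vi i * (1 / c + R i ^ 2 / c ^ 2) * Real.exp (R i ^ 2 / (2 * c)))
        ≤ ∑ i ∈ S, V * ((1 / c) * Real.exp (R i ^ 2 / (2 * c)) + R i ^ 2 / c ^ 2 * Real.exp (R i ^ 2 / (2 * c))) :=
          Finset.sum_le_sum this
      _ = V * ((1 / c) * A + D) := by
          rw [← Finset.mul_sum, Finset.sum_add_distrib, ← Finset.mul_sum]
  have hnum2 : (∑ i ∈ S, Vi i * (1 / c + R i ^ 2 / c ^ 2) * Real.exp (R i ^ 2 / (2 * c))) ≤ 2 * V * D := by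
    have h1 : (1 / c) * A ≤ D := by
      rw [div_mul_eq_mul_div, one_mul, div_le_iff₀ hc]
      linarith [hAcD]
    have : V * ((1 / c) * A + D) ≤ V * (2 * D) := by
      apply mul_le_mul_of_nonneg_left _ hV0
      linarith
    linarith
  rw [div_le_iff₀ (by linarith : (0:ℝ) < 2 * D)]
  nlinarith
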